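/- Let s > 0 and k* ∈ (1/2, Φ(s)). Define f : (0, ∞) → ℝ by f(ρ) = 1 − ∫₀¹ Φ((2ρx − ρ − s²)/s) dx, where Φ is the standard normal CDF. Then f is continuous and strictly decreasing on (0, ∞), lim_{ρ→0⁺} f(ρ) = Φ(s), lim_{ρ→∞} f(ρ) = 1/2, and hence there exists a unique ρ* > 0 with f(ρ*) = k*. -/

import Mathlib

open MeasureTheory ProbabilityTheory Set Filter
open scoped Topology

/-- The standard normal cumulative distribution function. -/
noncomputable def Phi (x : ℝ) : ℝ :=
  ∫ t in Set.Iic x, ProbabilityTheory.gaussianPDFReal 0 1 t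

lemma phi_cont : Continuous (gaussianPDFReal 0 1) := by
  unfold gaussianPDFReal; fun_prop

lemma phi_even (x : ℝ) : gaussianPDFReal 0 1 (-x) = gaussianPDFReal 0 1 x := by
  unfold gaussianPDFReal; norm_num

lemma phi_integrable : Integrable (gaussianPDFReal 0 1) := integrable_gaussianPDFReal 0 1

lemma gauss_lt_gauss {a b : ℝ} (h : a ^ 2 < b ^ 2) :
    gaussianPDFReal 0 1 b < gaussianPDFReal 0 1 a := by
  unfold gaussianPDFReal
  simp only [NNReal.coe_one, mul_one, sub_zero]
  have hπ := Real.pi_pos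
  apply mul_lt_mul_of_pos_left _ (inv_pos.2 (Real.sqrt_pos.2 (by positivity)))
  exact Real.exp_lt_exp.2 (by nlinarith)

set_option maxHeartbeats 1000000 in
lemma Phi_sub (a b : ℝ) : Phi b - Phi a = ∫ t in a..b, gaussianPDFReal 0 1 t := by
  have := intervalIntegral.integral_Iic_sub_Iic (f := gaussianPDFReal 0 1) (μ := volume)
    (a := a) (b := b) phi_integrable.integrableOn phi_integrable.integrableOn
  rw [← this]; rfl

lemma Phi_hasDerivAt (x : ℝ) : HasDerivAt Phi (gaussianPDFReal 0 1 x) x := by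
  have h : ∀ y, Phi y = Phi 0 + ∫ t in (0:ℝ)..y, gaussianPDFReal 0 1 t := by
    intro y; rw [← Phi_sub]; ring
  have := intervalIntegral.integral_hasDerivAt_right
    (phi_integrable.intervalIntegrable (a := 0) (b := x))
    phi_cont.stronglyMeasurable.stronglyMeasurableAtFilter phi_cont.continuousAt
  exact (this.const_add (Phi 0)).congr_of_eventuallyEq
    (Filter.Eventually.of_forall fun y => (h y))

lemma Phi_continuous : Continuous Phi :=
  continuous_iff_continuousAt.2 fun x => (Phi_hasDerivAt x).continuousAt

lemma Phi_eq_cdf (x : ℝ) : Phi x = ProbabilityTheory.cdf (gaussianReal 0 1) x := by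
  rw [cdf_eq_real, measureReal_def, gaussianReal_apply_eq_integral 0 (by norm_num) (Iic x),
    ENNReal.toReal_ofReal]
  · rfl
  · exact setIntegral_nonneg measurableSet_Iic fun t _ => gaussianPDFReal_nonneg 0 1 t

lemma Phi_le_one (x : ℝ) : Phi x ≤ 1 := by rw [Phi_eq_cdf]; exact cdf_le_one _ _
lemma Phi_nonneg (x : ℝ) : 0 ≤ Phi x := by rw [Phi_eq_cdf]; exact cdf_nonneg _ _

lemma Phi_tendsto_atTop : Tendsto Phi atTop (𝓝 1) := by
  have : Phi = ⇑(ProbabilityTheory.cdf (gaussianReal 0 1)) := funext Phi_eq_cdf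
  rw [this]; exact tendsto_cdf_atTop _

lemma Phi_tendsto_atBot : Tendsto Phi atBot (𝓝 0) := by
  have : Phi = ⇑(ProbabilityTheory.cdf (gaussianReal 0 1)) := funext Phi_eq_cdf
  rw [this]; exact tendsto_cdf_atBot _

lemma Phi_neg (x : ℝ) : Phi (-x) = 1 - Phi x := by
  have h1 : Phi (-x) = ∫ t in Set.Iic (-x), gaussianPDFReal 0 1 (-t) := by
    unfold Phi; congr 1; ext t; rw [phi_even]
  rw [h1, integral_comp_neg_Iic, neg_neg]
  have h2 : (∫ t, gaussianPDFReal 0 1 t) = 1 := integral_gaussianPDFReal_eq_one 0 (by norm_num)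
  have h3 := integral_add_compl (measurableSet_Iic (a := x)) phi_integrable
    (f := gaussianPDFReal 0 1)
  rw [Set.compl_Iic] at h3
  rw [← h2, ← h3]
  unfold Phi; ring

lemma Phi_strictMono : StrictMono Phi := by
  intro a b hab
  have h := Phi_sub a b
  have hp : 0 < ∫ t in a..b, gaussianPDFReal 0 1 t :=
    intervalIntegral.intervalIntegral_pos_of_pos (phi_integrable.intervalIntegrable)
      (fun t => gaussianPDFReal_pos 0 1 t (by norm_num)) hab
  linarith

/-- symmetrized integrand -/
noncomputable def hAux (s u : ℝ) : ℝ := Phi (u - s) + Phi (-u - s)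

lemma hAux_even (s u : ℝ) : hAux s (-u) = hAux s u := by
  unfold hAux; rw [neg_neg]; exact add_comm _ _

lemma hAux_cont (s : ℝ) : Continuous (hAux s) := by
  unfold hAux
  exact (Phi_continuous.comp (by fun_prop)).add (Phi_continuous.comp (by fun_prop))

lemma hAux_hasDerivAt (s u : ℝ) :
    HasDerivAt (hAux s) (gaussianPDFReal 0 1 (u - s) - gaussianPDFReal 0 1 (u + s)) u := by
  have h1 : HasDerivAt (fun v : ℝ => Phi (v - s)) (gaussianPDFReal 0 1 (u - s) * 1) u :=
    by have h := (Phi_hasDerivAt (u - s)).comp u ((hasDerivAt_id u).sub_const s); exact h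
  have h2 : HasDerivAt (fun v : ℝ => Phi (-v - s)) (gaussianPDFReal 0 1 (-u - s) * (-1)) u :=
    by have h := (Phi_hasDerivAt (-u - s)).comp u (((hasDerivAt_id u).neg).sub_const s); exact h
  have he : gaussianPDFReal 0 1 (-u - s) = gaussianPDFReal 0 1 (u + s) := by
    rw [show -u - s = -(u + s) by ring, phi_even]
  have := h1.add h2
  rw [he] at this
  exact this.congr_deriv (by ring)

lemma hAux_strictMonoOn {s : ℝ} (hs : 0 < s) : StrictMonoOn (hAux s) (Ici 0) := by
  apply strictMonoOn_of_deriv_pos (convex_Ici 0) (hAux_cont s).continuousOn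
  intro u hu
  rw [interior_Ici] at hu
  rw [(hAux_hasDerivAt s u).deriv]
  have : (u - s) ^ 2 < (u + s) ^ 2 := by nlinarith [mem_Ioi.mp hu]
  linarith [gauss_lt_gauss this]

lemma hAux_abs (s ρ c : ℝ) : hAux s (ρ * c / s) = hAux s (ρ * |c| / s) := by
  rcases abs_cases c with ⟨h, _⟩ | ⟨h, _⟩
  · rw [h]
  · rw [h, show ρ * -c / s = -(ρ * c / s) by ring, hAux_even]

lemma hAux_def (s u : ℝ) : hAux s u = Phi (u - s) + Phi (-u - s) := rfl

lemma integrand_cont (s ρ : ℝ) : Continuous fun x : ℝ => Phi ((2 * ρ * x - ρ - s ^ 2) / s) :=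
  Phi_continuous.comp (by fun_prop)

lemma key_identity (s ρ : ℝ) (hs : 0 < s) :
    2 * (∫ x in (0:ℝ)..1, Phi ((2 * ρ * x - ρ - s ^ 2) / s))
      = ∫ x in (0:ℝ)..1, hAux s (ρ * (2 * x - 1) / s) := by
  have hc := integrand_cont s ρ
  have h1 : (∫ x in (0:ℝ)..1, Phi ((2 * ρ * x - ρ - s ^ 2) / s))
      = ∫ x in (0:ℝ)..1, Phi ((2 * ρ * (1 - x) - ρ - s ^ 2) / s) := by
    rw [intervalIntegral.integral_comp_sub_left
      (fun x => Phi ((2 * ρ * x - ρ - s ^ 2) / s)) 1]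
    norm_num
  have hc2 : Continuous fun x : ℝ => Phi ((2 * ρ * (1 - x) - ρ - s ^ 2) / s) :=
    Phi_continuous.comp (by fun_prop)
  have h2 : (∫ x in (0:ℝ)..1, Phi ((2 * ρ * x - ρ - s ^ 2) / s))
        + (∫ x in (0:ℝ)..1, Phi ((2 * ρ * (1 - x) - ρ - s ^ 2) / s))
      = ∫ x in (0:ℝ)..1,
          (Phi ((2 * ρ * x - ρ - s ^ 2) / s) + Phi ((2 * ρ * (1 - x) - ρ - s ^ 2) / s)) :=
    (intervalIntegral.integral_add (hc.intervalIntegrable 0 1) (hc2.intervalIntegrable 0 1)).symm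
  have h3 : ∀ x : ℝ,
      Phi ((2 * ρ * x - ρ - s ^ 2) / s) + Phi ((2 * ρ * (1 - x) - ρ - s ^ 2) / s)
        = hAux s (ρ * (2 * x - 1) / s) := by
    intro x
    rw [hAux_def]
    congr 1
    · congr 1; field_simp
    · congr 1; field_simp; ring
  calc 2 * (∫ x in (0:ℝ)..1, Phi ((2 * ρ * x - ρ - s ^ 2) / s))
      = (∫ x in (0:ℝ)..1, Phi ((2 * ρ * x - ρ - s ^ 2) / s))
        + ∫ x in (0:ℝ)..1, Phi ((2 * ρ * (1 - x) - ρ - s ^ 2) / s) := by rw [← h1]; ring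
    _ = ∫ x in (0:ℝ)..1,
          (Phi ((2 * ρ * x - ρ - s ^ 2) / s) + Phi ((2 * ρ * (1 - x) - ρ - s ^ 2) / s)) := h2
    _ = ∫ x in (0:ℝ)..1, hAux s (ρ * (2 * x - 1) / s) :=
        intervalIntegral.integral_congr fun x _ => h3 x

lemma key_mono {s ρ₁ ρ₂ : ℝ} (hs : 0 < s) (h1 : 0 < ρ₁) (h12 : ρ₁ < ρ₂) :
    (∫ x in (0:ℝ)..1, Phi ((2 * ρ₁ * x - ρ₁ - s ^ 2) / s))
      < ∫ x in (0:ℝ)..1, Phi ((2 * ρ₂ * x - ρ₂ - s ^ 2) / s) := by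
  have hk1 := key_identity s ρ₁ hs
  have hk2 := key_identity s ρ₂ hs
  have nn : ∀ ρ x : ℝ, 0 < ρ → (0:ℝ) ≤ ρ * |2 * x - 1| / s := fun ρ x hρ =>
    div_nonneg (mul_nonneg hρ.le (abs_nonneg _)) hs.le
  have hle : ∀ x : ℝ, hAux s (ρ₁ * (2 * x - 1) / s) ≤ hAux s (ρ₂ * (2 * x - 1) / s) := by
    intro x
    rw [hAux_abs s ρ₁, hAux_abs s ρ₂]
    exact (hAux_strictMonoOn hs).monotoneOn (nn _ _ h1) (nn _ _ (h1.trans h12))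
      ((div_le_div_iff_of_pos_right hs).mpr (mul_le_mul_of_nonneg_right h12.le (abs_nonneg _)))
  have hstrict : ∀ x : ℝ, x ≠ 1 / 2 →
      hAux s (ρ₁ * (2 * x - 1) / s) < hAux s (ρ₂ * (2 * x - 1) / s) := by
    intro x hx
    rw [hAux_abs s ρ₁, hAux_abs s ρ₂]
    have habs : 0 < |2 * x - 1| := by
      rw [abs_pos]; intro hcon; apply hx; linarith
    exact hAux_strictMonoOn hs (nn _ _ h1) (nn _ _ (h1.trans h12))
      ((div_lt_div_iff_of_pos_right hs).mpr (mul_lt_mul_of_pos_right h12 habs))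
  have hci : ∀ ρ : ℝ, IntervalIntegrable (fun x => hAux s (ρ * (2 * x - 1) / s)) volume 0 1 :=
    fun ρ => ((hAux_cont s).comp (by fun_prop)).intervalIntegrable 0 1
  have hint : (∫ x in (0:ℝ)..1, hAux s (ρ₁ * (2 * x - 1) / s))
      < ∫ x in (0:ℝ)..1, hAux s (ρ₂ * (2 * x - 1) / s) := by
    apply intervalIntegral.integral_lt_integral_of_ae_le_of_measure_setOf_lt_ne_zero
      (by norm_num) (hci ρ₁) (hci ρ₂) (ae_of_all _ fun x => hle x)
    have hsub : Ioc (0:ℝ) 1 \ {1/2} ⊆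
        {x | hAux s (ρ₁ * (2 * x - 1) / s) < hAux s (ρ₂ * (2 * x - 1) / s)} :=
      fun x hx => hstrict x hx.2
    intro h0
    have hm : volume.restrict (Ioc (0:ℝ) 1) (Ioc (0:ℝ) 1 \ {1/2}) = 0 :=
      le_antisymm (h0 ▸ measure_mono hsub) (by simp)
    rw [Measure.restrict_apply (measurableSet_Ioc.diff (measurableSet_singleton _)),
      Set.inter_eq_left.mpr diff_subset, measure_diff_null (measure_singleton _)] at hm
    simp at hm
  linarith

/-- the acceptance probability `f(ρ) = 1 − ∫₀¹ Φ((2ρx − ρ − s²)/s) dx` of the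
piecewise-linear rule is continuous and strictly decreasing on `(0,∞)`, tends to `Φ(s)` at `0⁺`
and to `1/2` at `∞`; hence there is a unique `ρ* > 0` with `f(ρ*) = k*`. -/
theorem linear_rule_rho_exists_unique (s kstar : ℝ) (hs : 0 < s)
    (hk1 : 1 / 2 < kstar) (hk2 : kstar < Phi s)
    (f : ℝ → ℝ)
    (hf : ∀ ρ, f ρ = 1 - ∫ x in (0:ℝ)..1, Phi ((2 * ρ * x - ρ - s ^ 2) / s)) :
    ContinuousOn f (Set.Ioi 0) ∧
    StrictAntiOn f (Set.Ioi 0) ∧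
    Filter.Tendsto f (nhdsWithin 0 (Set.Ioi 0)) (nhds (Phi s)) ∧
    Filter.Tendsto f Filter.atTop (nhds (1 / 2)) ∧
    (∃! ρ : ℝ, 0 < ρ ∧ f ρ = kstar) := by
  have hfe : f = fun ρ => 1 - ∫ x in (0:ℝ)..1, Phi ((2 * ρ * x - ρ - s ^ 2) / s) := funext hf
  have hg : Continuous fun ρ : ℝ => ∫ x in (0:ℝ)..1, Phi ((2 * ρ * x - ρ - s ^ 2) / s) := by
    apply intervalIntegral.continuous_parametric_intervalIntegral_of_continuous'
      (f := fun ρ x : ℝ => Phi ((2 * ρ * x - ρ - s ^ 2) / s))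
    apply Phi_continuous.comp
    fun_prop
  have hcont : Continuous f := by rw [hfe]; exact continuous_const.sub hg
  have hanti : StrictAntiOn f (Set.Ioi 0) := by
    intro ρ₁ hρ₁ ρ₂ hρ₂ hlt
    rw [hf, hf]
    have := key_mono hs (mem_Ioi.mp hρ₁) hlt
    linarith
  have hf0 : f 0 = Phi s := by
    rw [hf]
    have hcongr : ∀ x : ℝ, Phi ((2 * 0 * x - 0 - s ^ 2) / s) = Phi (-s) := by
      intro x; congr 1; field_simp; ring
    rw [intervalIntegral.integral_congr fun x _ => hcongr x]
    simp [Phi_neg]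
  have hlim0 : Tendsto f (nhdsWithin 0 (Set.Ioi 0)) (𝓝 (Phi s)) := by
    have h := (hcont.tendsto 0).mono_left (nhdsWithin_le_nhds (s := Set.Ioi (0:ℝ)))
    rwa [hf0] at h
  -- limit at infinity
  set L : ℝ → ℝ := fun x => if 1 / 2 < x then 1 else 0 with hLdef
  have hLmeas : Measurable L := by
    apply Measurable.ite _ measurable_const measurable_const
    exact measurableSet_lt measurable_const measurable_id
  have hLii : ∀ a b : ℝ, IntervalIntegrable L volume a b := by
    intro a b
    rw [intervalIntegrable_iff]
    apply Measure.integrableOn_of_bounded (M := 1) (measure_Ioc_lt_top).ne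
      hLmeas.aestronglyMeasurable
    apply ae_of_all
    intro x
    simp only [hLdef, Real.norm_eq_abs]
    split <;> norm_num
  have hLint : (∫ x in (0:ℝ)..1, L x) = 1 / 2 := by
    have h1 : (∫ x in (0:ℝ)..(1/2 : ℝ), L x) = 0 := by
      rw [intervalIntegral.integral_congr (g := fun _ => (0:ℝ))]
      · simp
      · intro x hx
        rw [uIcc_of_le (by norm_num)] at hx
        simp only [hLdef]
        rw [if_neg (not_lt.mpr hx.2)]
    have h2 : (∫ x in (1/2 : ℝ)..1, L x) = 1 / 2 := by
      have : (∫ x in (1/2 : ℝ)..1, L x) = ∫ x in (1/2 : ℝ)..1, (1:ℝ) := by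
        apply intervalIntegral.integral_congr_ae
        apply ae_of_all
        intro x hx
        rw [uIoc_of_le (by norm_num)] at hx
        simp only [hLdef]
        rw [if_pos hx.1]
      rw [this]; simp; norm_num
    have := intervalIntegral.integral_add_adjacent_intervals (hLii 0 (1/2)) (hLii (1/2) 1)
    rw [h1, h2] at this
    rw [← this]; ring
  have hdct : Tendsto (fun ρ => ∫ x in (0:ℝ)..1, Phi ((2 * ρ * x - ρ - s ^ 2) / s))
      atTop (𝓝 (∫ x in (0:ℝ)..1, L x)) := by
    apply intervalIntegral.tendsto_integral_filter_of_dominated_convergence (bound := fun _ => 1)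
    · exact Filter.Eventually.of_forall fun ρ => (integrand_cont s ρ).aestronglyMeasurable
    · apply Filter.Eventually.of_forall
      intro ρ
      apply ae_of_all
      intro x _
      rw [Real.norm_eq_abs, abs_le]
      exact ⟨by linarith [Phi_nonneg ((2 * ρ * x - ρ - s ^ 2) / s)], Phi_le_one _⟩
    · exact intervalIntegrable_const
    · have hne : ∀ᵐ x : ℝ, x ≠ (1/2 : ℝ) := by
        rw [ae_iff]
        simpa only [ne_eq, not_not, Set.setOf_eq_eq_singleton] using measure_singleton (1/2 : ℝ)
      filter_upwards [hne] with x hx _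
      have hargeq : ∀ ρ : ℝ, ρ * ((2 * x - 1) / s) - s = (2 * ρ * x - ρ - s ^ 2) / s := by
        intro ρ; field_simp
      rcases lt_or_gt_of_ne hx with hlt | hgt
      · have hc : (2 * x - 1) / s < 0 := div_neg_of_neg_of_pos (by linarith) hs
        have harg : Tendsto (fun ρ : ℝ => (2 * ρ * x - ρ - s ^ 2) / s) atTop atBot := by
          apply Tendsto.congr hargeq
          exact tendsto_atBot_add_const_right _ (-s) (tendsto_id.atTop_mul_const_of_neg hc)
        have := Phi_tendsto_atBot.comp harg
        simpa only [hLdef, if_neg (not_lt.mpr hlt.le), Function.comp_def] using this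
      · have hc : 0 < (2 * x - 1) / s := div_pos (by linarith) hs
        have harg : Tendsto (fun ρ : ℝ => (2 * ρ * x - ρ - s ^ 2) / s) atTop atTop := by
          apply Tendsto.congr hargeq
          exact tendsto_atTop_add_const_right _ (-s) (tendsto_id.atTop_mul_const hc)
        have := Phi_tendsto_atTop.comp harg
        simpa only [hLdef, if_pos hgt, Function.comp_def] using this
  have hlimtop : Tendsto f atTop (𝓝 (1 / 2)) := by
    rw [hfe]
    have h := hdct.const_sub 1
    rw [hLint] at h
    norm_num at h ⊢
    exact h
  refine ⟨hcont.continuousOn, hanti, hlim0, hlimtop, ?_⟩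
  have ha : ∃ a, 0 < a ∧ kstar < f a := by
    have h1 : ∀ᶠ x in 𝓝[>] (0:ℝ), kstar < f x := hlim0.eventually (eventually_gt_nhds hk2)
    have h2 : ∀ᶠ x in 𝓝[>] (0:ℝ), x ∈ Set.Ioi (0:ℝ) := eventually_mem_nhdsWithin
    obtain ⟨a, h1a, h2a⟩ := (h1.and h2).exists
    exact ⟨a, h2a, h1a⟩
  obtain ⟨a, ha0, haf⟩ := ha
  have hb : ∃ b, a < b ∧ f b < kstar := by
    have h1 : ∀ᶠ x in atTop, f x < kstar := hlimtop.eventually (eventually_lt_nhds hk1)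
    obtain ⟨b, hb1, hb2⟩ := (h1.and (eventually_gt_atTop a)).exists
    exact ⟨b, hb2, hb1⟩
  obtain ⟨b, hab, hbf⟩ := hb
  obtain ⟨ρ, hρmem, hρeq⟩ := intermediate_value_Icc' hab.le hcont.continuousOn
    (⟨hbf.le, haf.le⟩ : kstar ∈ Set.Icc (f b) (f a))
  have hρ0 : 0 < ρ := lt_of_lt_of_le ha0 hρmem.1
  refine ⟨ρ, ⟨hρ0, hρeq⟩, ?_⟩
  rintro ρ' ⟨hρ'0, hρ'eq⟩
  by_contra hne
  rcases lt_or_gt_of_ne hne with h | h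
  · have := hanti (mem_Ioi.mpr hρ'0) (mem_Ioi.mpr hρ0) h
    rw [hρeq, hρ'eq] at this; exact lt_irrefl _ this
  · have := hanti (mem_Ioi.mpr hρ0) (mem_Ioi.mpr hρ'0) h
    rw [hρeq, hρ'eq] at this; exact lt_irrefl _ this
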